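/- For every n ≥ 4, there exists a finite simple graph G on n vertices that is not a forest (i.e., G contains a cycle) such that γ_gr^L(G) = n. -/

import Mathlib

/-- A list of distinct vertices `s = (v_1, …, v_k)` is an *L-sequence* of `G` if for each `i`,
`N[v_i] \ ⋃_{j<i} N(v_j) ≠ ∅`, i.e. there is a vertex `w` in the closed neighborhood of `v_i`
that lies in no open neighborhood `N(v_j)` for `j < i`. -/
def IsLSeq {V : Type*} (G : SimpleGraph V) (s : List V) : Prop :=
  s.Nodup ∧ ∀ i : Fin s.length, ∃ w : V,
    (w = s.get i ∨ G.Adj (s.get i) w) ∧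
    ∀ j : Fin s.length, j < i → ¬ G.Adj (s.get j) w

/-- The L-Grundy domination number of `G`: the maximum length of an L-sequence of `G`. -/
noncomputable def LGrundy {V : Type*} [Fintype V] (G : SimpleGraph V) : ℕ :=
  sSup {k : ℕ | ∃ s : List V, IsLSeq G s ∧ s.length = k}

namespace LGaux

def P (a b : ℕ) : Prop := (a = 0 ∧ (b = 1 ∨ b = 2 ∨ b = 3)) ∨ (a = 1 ∧ b = 2)

def G (n : ℕ) : SimpleGraph (Fin n) where
  Adj u v := P u.val v.val ∨ P v.val u.val
  symm := ⟨by intro u v h; tauto⟩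
  loopless := ⟨by intro u h; simp only [P] at h; omega⟩

def f (n : ℕ) (hn : 4 ≤ n) (v : Fin n) : Fin n :=
  ⟨if v.val = 0 then 3 else if v.val = 3 then 0 else v.val, by
    have := v.isLt; split_ifs <;> omega⟩

lemma f_inj (n : ℕ) (hn : 4 ≤ n) : Function.Injective (f n hn) := by
  intro u v h
  have h' := congrArg Fin.val h
  simp only [f] at h'
  apply Fin.ext
  split_ifs at h' <;> omega

lemma key (a b : ℕ) (hb : b < a) :
    ¬ (P (if b = 0 then 3 else if b = 3 then 0 else b)
         (if a = 2 then 1 else if a = 0 ∨ a = 3 then 3 else a) ∨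
       P (if a = 2 then 1 else if a = 0 ∨ a = 3 then 3 else a)
         (if b = 0 then 3 else if b = 3 then 0 else b)) := by
  split_ifs <;> first | (simp [P]; omega) | simp [P] | omega

lemma key2 (a : ℕ) :
    (if a = 2 then 1 else if a = 0 ∨ a = 3 then 3 else a) =
      (if a = 0 then 3 else if a = 3 then 0 else a) ∨
    (P (if a = 0 then 3 else if a = 3 then 0 else a)
       (if a = 2 then 1 else if a = 0 ∨ a = 3 then 3 else a) ∨
     P (if a = 2 then 1 else if a = 0 ∨ a = 3 then 3 else a)
       (if a = 0 then 3 else if a = 3 then 0 else a)) := by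
  split_ifs <;> first | (simp [P]; omega) | simp [P] | omega

lemma lseq (n : ℕ) (hn : 4 ≤ n) :
    ∃ s : List (Fin n), IsLSeq (G n) s ∧ s.length = n := by
  refine ⟨(List.finRange n).map (f n hn), ⟨(List.nodup_finRange n).map (f_inj n hn), ?_⟩, by simp⟩
  set s : List (Fin n) := (List.finRange n).map (f n hn) with hs
  have hget : ∀ j : Fin s.length, (s.get j).val =
      (if j.val = 0 then 3 else if j.val = 3 then 0 else j.val) := by
    intro j; simp [hs, f]
  intro i
  have hi : i.val < n := by have := i.isLt; simpa [hs] using this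
  refine ⟨⟨if i.val = 2 then 1 else if i.val = 0 ∨ i.val = 3 then 3 else i.val, by
      split_ifs <;> omega⟩, ?_, ?_⟩
  · rw [Fin.ext_iff, hget i]
    show _ ∨ (P (s.get i).val _ ∨ P _ (s.get i).val)
    rw [hget i]
    exact key2 i.val
  · intro j hj
    have hj' : j.val < i.val := hj
    show ¬ (P (s.get j).val _ ∨ P _ (s.get j).val)
    rw [hget j]
    exact key i.val j.val hj'

lemma not_acyclic (n : ℕ) (hn : 4 ≤ n) : ¬ (G n).IsAcyclic := by
  have h0 : 0 < n := by omega
  have h1 : 1 < n := by omega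
  have h2 : 2 < n := by omega
  have a01 : (G n).Adj ⟨0, h0⟩ ⟨1, h1⟩ := Or.inl (Or.inl ⟨rfl, Or.inl rfl⟩)
  have a12 : (G n).Adj ⟨1, h1⟩ ⟨2, h2⟩ := Or.inl (Or.inr ⟨rfl, rfl⟩)
  have a20 : (G n).Adj ⟨2, h2⟩ ⟨0, h0⟩ := Or.inr (Or.inl ⟨rfl, Or.inr (Or.inl rfl)⟩)
  intro hA
  exact hA (SimpleGraph.Walk.cons a01 (SimpleGraph.Walk.cons a12
      (SimpleGraph.Walk.cons a20 SimpleGraph.Walk.nil))) (by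
    simp [SimpleGraph.Walk.isCycle_def, SimpleGraph.Walk.isTrail_def, Fin.ext_iff,
      Sym2.eq, Sym2.rel_iff'])

end LGaux

/-- For every `n ≥ 4` there is a graph on `n` vertices which is not a forest
(i.e. contains a cycle) whose L-Grundy domination number equals `n`. -/
theorem exists_non_forest_lgrundy_eq_card (n : ℕ) (hn : 4 ≤ n) :
    ∃ G : SimpleGraph (Fin n), ¬ G.IsAcyclic ∧ LGrundy G = n := by
  refine ⟨LGaux.G n, LGaux.not_acyclic n hn, ?_⟩
  have hub : ∀ k ∈ {k : ℕ | ∃ s : List (Fin n), IsLSeq (LGaux.G n) s ∧ s.length = k},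
      k ≤ n := by
    rintro k ⟨s, hs, rfl⟩
    simpa using hs.1.length_le_card
  have hmem : n ∈ {k : ℕ | ∃ s : List (Fin n), IsLSeq (LGaux.G n) s ∧ s.length = k} :=
    LGaux.lseq n hn
  exact le_antisymm (csSup_le ⟨n, hmem⟩ hub) (le_csSup ⟨n, hub⟩ hmem)
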